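/- Let T be a spanning tree of a connected graph G and let (e₁,f₁),...,(e_ℓ,f_ℓ) be pairs with all e₁,...,e_ℓ,f₁,...,f_ℓ distinct edges, e_i ∉ T, and f_i ∈ P_T(e_i) for each i. If T' = (T ∪ {e₁,...,e_ℓ}) \ {f₁,...,f_ℓ} is not a spanning tree of G, then there exist distinct indices j₁,...,j_κ ∈ {1,...,ℓ} with κ ≥ 2 such that f_{j_i} ∈ P_T(e_{j_{i+1}}) for all i ∈ {1,...,κ} (indices taken cyclically, so f_{j_κ} ∈ P_T(e_{j_1})). -/

import Mathlib

open Finset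

/-- `T` is (the edge set of) a spanning tree of `G`: its edges are edges of `G`
and the graph formed by these edges is a tree (connected and acyclic, spanning all vertices). -/
def IsSpanningTree {V : Type*} (G : SimpleGraph V) (T : Finset (Sym2 V)) : Prop :=
  (T : Set (Sym2 V)) ⊆ G.edgeSet ∧ (SimpleGraph.fromEdgeSet (T : Set (Sym2 V))).IsTree

/-- `f` lies on the unique path in the tree `T` joining the endpoints of `e`:
equivalently, `f ∈ T` and removing `f` disconnects the endpoints of `e` in `T`. -/
def OnTreePath {V : Type*} (T : Finset (Sym2 V)) (e f : Sym2 V) : Prop :=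
  f ∈ T ∧ ∀ u v : V, e = s(u, v) →
    ¬ (SimpleGraph.fromEdgeSet ((T : Set (Sym2 V)) \ {f})).Reachable u v

/-- Path optimality conditions for a spanning tree `T` of `G` with edge costs `w`. -/
def PathOpt {V : Type*} (G : SimpleGraph V) (T : Finset (Sym2 V)) (w : Sym2 V → ℝ) : Prop :=
  ∀ u v : V, s(u, v) ∈ G.edgeSet → s(u, v) ∉ T →
    ∀ f, OnTreePath T s(u, v) f → w f ≤ w (s(u, v))

/-- The sufficient pair optimality conditions of Theorem 2, with explicit witnesses `α`, `β`. -/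
def SuffPairOpt {V : Type*} [Fintype V] [DecidableEq V] (G : SimpleGraph V)
    (C c : Sym2 V → ℝ) (θ : ℝ) (X Y : Finset (Sym2 V)) (α β : Sym2 V → ℝ) : Prop :=
  (∀ e, 0 ≤ α e) ∧ (∀ e, 0 ≤ β e) ∧ (∀ e ∈ G.edgeSet, α e + β e = θ) ∧
  (∀ T, IsSpanningTree G T → ∑ e ∈ X, (C e - α e) ≤ ∑ e ∈ T, (C e - α e)) ∧
  (∀ T, IsSpanningTree G T → ∑ e ∈ Y, (c e - β e) ≤ ∑ e ∈ T, (c e - β e)) ∧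
  (∀ e ∈ X \ Y, α e = 0) ∧ (∀ e ∈ Y \ X, β e = 0)

/-- Arcs of the admissible graph for the pair `(X,Y)` with reduced costs `Cs`, `cs`:
an `X`-arc `(a,b)` with `a ∉ X`, `b ∈ P_X(a)`, `Cs a = Cs b`, or a `Y`-arc `(a,b)`
(i.e. `(v_f,v_e)` with `f = a`, `e = b`) with `b ∉ Y`, `a ∈ P_Y(b)`, `cs b = cs a`. -/
def AdmArc {V : Type*} [Fintype V] [DecidableEq V] (X Y : Finset (Sym2 V))
    (Cs cs : Sym2 V → ℝ) (a b : Sym2 V) : Prop :=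
  (a ∉ X ∧ OnTreePath X a b ∧ Cs a = Cs b) ∨ (b ∉ Y ∧ OnTreePath Y b a ∧ cs b = cs a)

/-- A node of the admissible graph is admissible if it is reachable (by a directed path)
from some node `v_g` with `g ∈ Y \ X`. -/
def AdmNode {V : Type*} [Fintype V] [DecidableEq V] (X Y : Finset (Sym2 V))
    (Cs cs : Sym2 V → ℝ) (h : Sym2 V) : Prop :=
  ∃ g, g ∈ Y ∧ g ∉ X ∧ Relation.ReflTransGen (AdmArc X Y Cs cs) g h

set_option linter.unusedSectionVars false

namespace Stmt6Aux

open SimpleGraph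

variable {V : Type*} [Fintype V] [DecidableEq V]

lemma sym2_rep (z : Sym2 V) : ∃ p q : V, z = s(p, q) :=
  Sym2.ind (fun p q => ⟨p, q, rfl⟩) z

lemma reach_of_forall {H K : SimpleGraph V} (h : ∀ a b : V, H.Adj a b → K.Reachable a b)
    {u v : V} (hr : H.Reachable u v) : K.Reachable u v := by
  obtain ⟨w⟩ := hr
  induction w with
  | nil => exact Reachable.refl _
  | cons ha _ ih => exact (h _ _ ha).trans ih

lemma split_reach {s : Set (Sym2 V)} {x y u v : V}
    (h : (fromEdgeSet (insert s(x, y) s)).Reachable u v) :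
    (fromEdgeSet s).Reachable u v ∨
      ((fromEdgeSet s).Reachable u x ∧ (fromEdgeSet s).Reachable y v) ∨
      ((fromEdgeSet s).Reachable u y ∧ (fromEdgeSet s).Reachable x v) := by
  obtain ⟨w⟩ := h
  induction w with
  | nil => exact Or.inl (Reachable.refl _)
  | cons ha _ ih =>
    rw [fromEdgeSet_adj _] at ha
    obtain ⟨hmem, hne⟩ := ha
    rcases Set.mem_insert_iff.mp hmem with heq | hmem'
    · rw [Sym2.eq_iff] at heq
      rcases heq with ⟨rfl, rfl⟩ | ⟨rfl, rfl⟩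
      · rcases ih with h1 | ⟨h1, h2⟩ | ⟨h1, h2⟩
        · exact Or.inr (Or.inl ⟨Reachable.refl _, h1⟩)
        · exact Or.inl (h1.symm.trans h2)
        · exact Or.inl h2
      · rcases ih with h1 | ⟨h1, h2⟩ | ⟨h1, h2⟩
        · exact Or.inr (Or.inr ⟨Reachable.refl _, h1⟩)
        · exact Or.inl h2
        · exact Or.inl (h1.symm.trans h2)
    · have ha' : (fromEdgeSet s).Adj _ _ := (fromEdgeSet_adj _).mpr ⟨hmem', hne⟩
      rcases ih with h1 | ⟨h1, h2⟩ | ⟨h1, h2⟩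
      · exact Or.inl (ha'.reachable.trans h1)
      · exact Or.inr (Or.inl ⟨ha'.reachable.trans h1, h2⟩)
      · exact Or.inr (Or.inr ⟨ha'.reachable.trans h1, h2⟩)

lemma two_sides {T : Finset (Sym2 V)} (hconn : (fromEdgeSet (T : Set (Sym2 V))).Connected)
    {x y : V} (hfT : s(x, y) ∈ T) (u : V) :
    (fromEdgeSet ((T : Set (Sym2 V)) \ {s(x, y)})).Reachable u x ∨
      (fromEdgeSet ((T : Set (Sym2 V)) \ {s(x, y)})).Reachable u y := by
  have hr := hconn.preconnected u x
  have hins : (T : Set (Sym2 V)) = insert s(x, y) ((T : Set (Sym2 V)) \ {s(x, y)}) := by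
    rw [Set.insert_diff_singleton, Set.insert_eq_self.mpr (Finset.mem_coe.mpr hfT)]
  rw [hins] at hr
  rcases split_reach hr with h | ⟨h1, _⟩ | ⟨h1, _⟩
  exacts [Or.inl h, Or.inl h1, Or.inr h1]

lemma not_otp_reach {T : Finset (Sym2 V)} {e g : Sym2 V} (hgT : g ∈ T)
    (hno : ¬ OnTreePath T e g) {u v : V} (he : e = s(u, v)) :
    (fromEdgeSet ((T : Set (Sym2 V)) \ {g})).Reachable u v := by
  by_contra hr
  apply hno
  refine ⟨hgT, fun a b hab => ?_⟩
  rw [he, Sym2.eq_iff] at hab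
  rcases hab with ⟨rfl, rfl⟩ | ⟨rfl, rfl⟩
  · exact hr
  · exact fun h => hr h.symm

lemma otp_sides {T : Finset (Sym2 V)} (hconn : (fromEdgeSet (T : Set (Sym2 V))).Connected)
    {p q x y : V} (hof : OnTreePath T s(p, q) s(x, y)) :
    ((fromEdgeSet ((T : Set (Sym2 V)) \ {s(x, y)})).Reachable p x ∧
      (fromEdgeSet ((T : Set (Sym2 V)) \ {s(x, y)})).Reachable q y) ∨
    ((fromEdgeSet ((T : Set (Sym2 V)) \ {s(x, y)})).Reachable p y ∧
      (fromEdgeSet ((T : Set (Sym2 V)) \ {s(x, y)})).Reachable q x) := by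
  have hp := two_sides hconn hof.1 p
  have hq := two_sides hconn hof.1 q
  have hnr := hof.2 p q rfl
  rcases hp with hp | hp <;> rcases hq with hq | hq
  · exact absurd (hp.trans hq.symm) hnr
  · exact Or.inl ⟨hp, hq⟩
  · exact Or.inr ⟨hp, hq⟩
  · exact absurd (hp.trans hq.symm) hnr

end Stmt6Aux

namespace Stmt6Aux
open SimpleGraph

variable {V : Type*} [Fintype V] [DecidableEq V]

lemma exchange {G : SimpleGraph V} {T : Finset (Sym2 V)} (hT : IsSpanningTree G T)
    {e f : Sym2 V} (heG : e ∈ G.edgeSet) (heT : e ∉ T) (hof : OnTreePath T e f) :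
    IsSpanningTree G (insert e (T.erase f)) := by
  obtain ⟨p, q, rfl⟩ := sym2_rep e
  obtain ⟨x, y, rfl⟩ := sym2_rep f
  have hpq : p ≠ q := (G.mem_edgeSet.mp heG).ne
  have hfT : s(x, y) ∈ T := hof.1
  have hcoe : ((insert s(p,q) (T.erase s(x,y)) : Finset (Sym2 V)) : Set (Sym2 V)) =
      insert s(p,q) ((T : Set (Sym2 V)) \ {s(x,y)}) := by
    simp [Finset.coe_insert, Finset.coe_erase]
  have hsides := otp_sides hT.2.isConnected hof
  have hmono : fromEdgeSet ((T : Set (Sym2 V)) \ {s(x,y)}) ≤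
      fromEdgeSet (insert s(p,q) ((T : Set (Sym2 V)) \ {s(x,y)})) :=
    fromEdgeSet_mono (Set.subset_insert _ _)
  have hadj : (fromEdgeSet (insert s(p,q) ((T : Set (Sym2 V)) \ {s(x,y)}))).Adj p q :=
    (fromEdgeSet_adj _).mpr ⟨Set.mem_insert _ _, hpq⟩
  have hxyr : (fromEdgeSet (insert s(p,q) ((T : Set (Sym2 V)) \ {s(x,y)}))).Reachable x y := by
    rcases hsides with ⟨h1, h2⟩ | ⟨h1, h2⟩
    · exact (h1.mono hmono).symm.trans (hadj.reachable.trans (h2.mono hmono))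
    · exact (h2.mono hmono).symm.trans (hadj.symm.reachable.trans (h1.mono hmono))
  refine ⟨?_, ?_⟩
  · rw [hcoe]
    exact Set.insert_subset_iff.mpr ⟨heG, Set.diff_subset.trans hT.1⟩
  rw [hcoe]
  constructor
  · rw [connected_iff]
    refine ⟨fun u v => ?_, hT.2.isConnected.nonempty⟩
    refine reach_of_forall ?_ (hT.2.isConnected.preconnected u v)
    intro a b hab
    rw [fromEdgeSet_adj _] at hab
    obtain ⟨habT, hne'⟩ := hab
    by_cases hfcase : s(a, b) = s(x, y)
    · rw [Sym2.eq_iff] at hfcase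
      rcases hfcase with ⟨rfl, rfl⟩ | ⟨rfl, rfl⟩
      · exact hxyr
      · exact hxyr.symm
    · have hmem2 : s(a, b) ∈ insert s(p,q) ((T : Set (Sym2 V)) \ {s(x,y)}) :=
        Set.mem_insert_of_mem _ ⟨habT, hfcase⟩
      exact ((fromEdgeSet_adj _).mpr ⟨hmem2, hne'⟩).reachable
  · intro v c hc
    by_cases he : s(p, q) ∈ c.edges
    · have h2 := (adj_and_reachable_delete_edges_iff_exists_cycle.mpr ⟨v, c, hc, he⟩).2
      rw [deleteEdges_fromEdgeSet] at h2
      have hsub2 : (insert s(p,q) ((T : Set (Sym2 V)) \ {s(x,y)})) \ {s(p,q)} ⊆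
          (T : Set (Sym2 V)) \ {s(x,y)} := by
        rintro z ⟨hz1, hz2⟩
        rcases Set.mem_insert_iff.mp hz1 with rfl | hz3
        · exact absurd rfl hz2
        · exact hz3
      exact hof.2 p q rfl (h2.mono (fromEdgeSet_mono hsub2))
    · have hedges : ∀ w ∈ c.edges, w ∈ (fromEdgeSet (T : Set (Sym2 V))).edgeSet := by
        intro w hw
        have hw' := c.edges_subset_edgeSet hw
        rw [edgeSet_fromEdgeSet] at hw' ⊢
        obtain ⟨hw1, hw2⟩ := hw'
        refine ⟨?_, hw2⟩
        rcases Set.mem_insert_iff.mp hw1 with rfl | hw3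
        · exact absurd hw he
        · exact hw3.1
      exact hT.2.IsAcyclic _ (hc.transfer hedges)

end Stmt6Aux

namespace Stmt6Aux
open SimpleGraph

variable {V : Type*} [Fintype V] [DecidableEq V]

lemma cut_pres {G : SimpleGraph V} {T : Finset (Sym2 V)} (hT : IsSpanningTree G T)
    {e f g : Sym2 V} (heG : e ∈ G.edgeSet) (heT : e ∉ T) (hof : OnTreePath T e f)
    (hgT : g ∈ T) (hgf : g ≠ f)
    (hre : ∀ u v : V, e = s(u, v) → (fromEdgeSet ((T : Set (Sym2 V)) \ {g})).Reachable u v)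
    (u v : V) :
    (fromEdgeSet (((insert e (T.erase f) : Finset (Sym2 V)) : Set (Sym2 V)) \ {g})).Reachable u v
      ↔ (fromEdgeSet ((T : Set (Sym2 V)) \ {g})).Reachable u v := by
  obtain ⟨p, q, rfl⟩ := sym2_rep e
  obtain ⟨x, y, rfl⟩ := sym2_rep f
  have hpq : p ≠ q := (G.mem_edgeSet.mp heG).ne
  have hfT : s(x, y) ∈ T := hof.1
  have heg : s(p, q) ≠ g := fun h => heT (h ▸ hgT)
  -- the modified edge set, with g removed
  have hTg_coe : ((insert s(p,q) (T.erase s(x,y)) : Finset (Sym2 V)) : Set (Sym2 V)) \ {g} =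
      insert s(p,q) (((T : Set (Sym2 V)) \ {s(x,y)}) \ {g}) := by
    ext z
    simp only [Finset.coe_insert, Finset.coe_erase, Set.mem_diff, Set.mem_insert_iff,
      Set.mem_singleton_iff, Finset.mem_coe]
    constructor
    · rintro ⟨rfl | ⟨hz1, hz2⟩, hz3⟩
      · exact Or.inl rfl
      · exact Or.inr ⟨⟨hz1, hz2⟩, hz3⟩
    · rintro (rfl | ⟨⟨hz1, hz2⟩, hz3⟩)
      · exact ⟨Or.inl rfl, heg⟩
      · exact ⟨Or.inr ⟨hz1, hz2⟩, hz3⟩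
  -- key: endpoints of f are joined in the new graph minus g
  have hadj : (fromEdgeSet (insert s(p,q) (((T : Set (Sym2 V)) \ {s(x,y)}) \ {g}))).Adj p q :=
    (fromEdgeSet_adj _).mpr ⟨Set.mem_insert _ _, hpq⟩
  have hmono : fromEdgeSet (((T : Set (Sym2 V)) \ {s(x,y)}) \ {g}) ≤
      fromEdgeSet (insert s(p,q) (((T : Set (Sym2 V)) \ {s(x,y)}) \ {g})) :=
    fromEdgeSet_mono (Set.subset_insert _ _)
  have key : (fromEdgeSet (insert s(p,q) (((T : Set (Sym2 V)) \ {s(x,y)}) \ {g}))).Reachable x y := by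
    have hr0 := hre p q rfl
    have hsplit : (T : Set (Sym2 V)) \ {g} =
        insert s(x,y) ((((T : Set (Sym2 V)) \ {s(x,y)})) \ {g}) := by
      ext z
      simp only [Set.mem_diff, Set.mem_insert_iff, Set.mem_singleton_iff, Finset.mem_coe]
      constructor
      · rintro ⟨hzT, hzg⟩
        by_cases hzf : z = s(x, y)
        · exact Or.inl hzf
        · exact Or.inr ⟨⟨hzT, hzf⟩, hzg⟩
      · rintro (rfl | ⟨⟨h1, h2⟩, h3⟩)
        · exact ⟨hfT, fun h => hgf h.symm⟩
        · exact ⟨h1, h3⟩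
    rw [hsplit] at hr0
    rcases split_reach hr0 with hA | ⟨h1, h2⟩ | ⟨h1, h2⟩
    · exact absurd (hA.mono (fromEdgeSet_mono Set.diff_subset)) (hof.2 p q rfl)
    · exact (h1.mono hmono).symm.trans (hadj.reachable.trans (h2.mono hmono).symm)
    · exact (h2.mono hmono).trans (hadj.symm.reachable.trans (h1.mono hmono))
  rw [hTg_coe]
  constructor
  · intro h
    refine reach_of_forall ?_ h
    intro a b hab
    rw [fromEdgeSet_adj _] at hab
    obtain ⟨h1, h2⟩ := hab
    rcases Set.mem_insert_iff.mp h1 with heq | hmem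
    · rw [Sym2.eq_iff] at heq
      rcases heq with ⟨rfl, rfl⟩ | ⟨rfl, rfl⟩
      · exact hre _ _ rfl
      · exact (hre _ _ rfl).symm
    · have hmem2 : s(a, b) ∈ (T : Set (Sym2 V)) \ {g} := ⟨hmem.1.1, hmem.2⟩
      exact ((fromEdgeSet_adj _).mpr ⟨hmem2, h2⟩).reachable
  · intro h
    refine reach_of_forall ?_ h
    intro a b hab
    rw [fromEdgeSet_adj _] at hab
    obtain ⟨⟨h1, h2⟩, h3⟩ := hab
    by_cases hzf : s(a, b) = s(x, y)
    · rw [Sym2.eq_iff] at hzf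
      rcases hzf with ⟨rfl, rfl⟩ | ⟨rfl, rfl⟩
      · exact key
      · exact key.symm
    · have hmem2 : s(a, b) ∈ insert s(p,q) (((T : Set (Sym2 V)) \ {s(x,y)}) \ {g}) :=
        Set.mem_insert_of_mem _ ⟨⟨h1, hzf⟩, h2⟩
      exact ((fromEdgeSet_adj _).mpr ⟨hmem2, h3⟩).reachable

lemma otp_pres {G : SimpleGraph V} {T : Finset (Sym2 V)} (hT : IsSpanningTree G T)
    {e f g : Sym2 V} (heG : e ∈ G.edgeSet) (heT : e ∉ T) (hof : OnTreePath T e f)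
    (hgT : g ∈ T) (hgf : g ≠ f)
    (hre : ∀ u v : V, e = s(u, v) → (fromEdgeSet ((T : Set (Sym2 V)) \ {g})).Reachable u v)
    (h : Sym2 V) :
    OnTreePath (insert e (T.erase f)) h g ↔ OnTreePath T h g := by
  have hg' : g ∈ insert e (T.erase f) :=
    Finset.mem_insert_of_mem (Finset.mem_erase.mpr ⟨hgf, hgT⟩)
  constructor
  · rintro ⟨_, hr⟩
    exact ⟨hgT, fun u v huv hre' => hr u v huv
      ((cut_pres hT heG heT hof hgT hgf hre u v).mpr hre')⟩
  · rintro ⟨_, hr⟩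
    exact ⟨hg', fun u v huv hre' => hr u v huv
      ((cut_pres hT heG heT hof hgT hgf hre u v).mp hre')⟩

end Stmt6Aux

namespace Stmt6Aux
open SimpleGraph Finset

variable {V : Type*} [Fintype V] [DecidableEq V]

lemma lemA {G : SimpleGraph V} (hG : G.Connected) {ℓ : ℕ} (e f : Fin ℓ → Sym2 V)
    (hdist : ∀ i j : Fin ℓ, (e i = e j → i = j) ∧ (f i = f j → i = j) ∧ e i ≠ f j)
    (heG : ∀ i, e i ∈ G.edgeSet) (S : Finset (Fin ℓ)) :
    ∀ (T : Finset (Sym2 V)), IsSpanningTree G T →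
      (∀ i ∈ S, e i ∉ T) → (∀ i ∈ S, OnTreePath T (e i) (f i)) →
      (¬ ∃ κ : ℕ, ∃ _ : 2 ≤ κ, ∃ g : Fin κ → Fin ℓ, (∀ i, g i ∈ S) ∧ Function.Injective g ∧
        ∀ i : Fin κ, OnTreePath T (e (g ⟨(i.1 + 1) % κ, Nat.mod_lt _ (Nat.lt_of_lt_of_le (by decide : 0 < 2) ‹_›)⟩)) (f (g i))) →
      IsSpanningTree G ((T ∪ S.image e) \ S.image f) := by
  classical
  induction S using Finset.strongInductionOn with
  | _ S ih =>
  intro T hT hET hFP hacyc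
  rcases S.eq_empty_or_nonempty with rfl | hS
  · simpa using hT
  -- find a source
  have hsrc : ∃ s ∈ S, ∀ j ∈ S, j ≠ s → ¬ OnTreePath T (e s) (f j) := by
    by_contra hno
    push_neg at hno
    obtain ⟨s0, hs0⟩ := hS
    have hno' : ∀ i : Fin ℓ, ∃ j : Fin ℓ, i ∈ S →
        j ∈ S ∧ j ≠ i ∧ OnTreePath T (e i) (f j) := by
      intro i
      by_cases hi : i ∈ S
      · obtain ⟨j, hj1, hj2, hj3⟩ := hno i hi
        exact ⟨j, fun _ => ⟨hj1, hj2, hj3⟩⟩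
      · exact ⟨s0, fun h => absurd h hi⟩
    choose nxt hnxt using hno'
    let a : ℕ → Fin ℓ := fun n => Nat.rec s0 (fun _ prev => nxt prev) n
    have haS : ∀ n, a n ∈ S := by
      intro n; induction n with
      | zero => exact hs0
      | succ n ihn => exact (hnxt (a n) ihn).1
    have hane : ∀ n, a (n + 1) ≠ a n := fun n => (hnxt (a n) (haS n)).2.1
    have harc : ∀ n, OnTreePath T (e (a n)) (f (a (n + 1))) :=
      fun n => (hnxt (a n) (haS n)).2.2
    obtain ⟨m, n, hmn, hfeq⟩ := Finite.exists_ne_map_eq_of_infinite a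
    have hP : ∃ k, ∃ m' < k, a m' = a k := by
      rcases Nat.lt_or_ge m n with h | h
      · exact ⟨n, m, h, hfeq⟩
      · exact ⟨m, n, lt_of_le_of_ne h (Ne.symm hmn), hfeq.symm⟩
    haveI : DecidablePred fun k => ∃ m' < k, a m' = a k := fun _ => Classical.dec _
    set n2 := Nat.find hP with hn2def
    obtain ⟨n1, hn1lt, heq⟩ := Nat.find_spec hP
    have hdistinct : ∀ j j', j < j' → j' < n2 → a j ≠ a j' :=
      fun j j' hjj hj2 hEq => Nat.find_min hP hj2 ⟨j, hjj, hEq⟩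
    have hne2 : n2 ≠ n1 + 1 := fun h => hane n1 (by rw [← h]; exact heq.symm)
    have hk2 : 2 ≤ n2 - n1 := by omega
    refine hacyc ⟨n2 - n1, hk2, fun i => a (n2 - 1 - i.1), fun i => haS _, ?_, ?_⟩
    · intro i i' hii
      have hi : i.1 < n2 - n1 := i.2
      have hi' : i'.1 < n2 - n1 := i'.2
      have h1 : n2 - 1 - i.1 = n2 - 1 - i'.1 := by
        by_contra hne
        rcases Nat.lt_or_ge (n2 - 1 - i.1) (n2 - 1 - i'.1) with h | h
        · exact hdistinct _ _ h (by omega) hii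
        · exact hdistinct _ _ (by omega) (by omega) hii.symm
      exact Fin.ext (by omega)
    · intro i
      have hi : i.1 < n2 - n1 := i.2
      show OnTreePath T (e (a (n2 - 1 - ((i.1 + 1) % (n2 - n1))))) (f (a (n2 - 1 - i.1)))
      rcases Nat.lt_or_ge (i.1 + 1) (n2 - n1) with hlt | hge
      · have h1 : (i.1 + 1) % (n2 - n1) = i.1 + 1 := Nat.mod_eq_of_lt hlt
        have h2 : n2 - 1 - i.1 = (n2 - 1 - (i.1 + 1)) + 1 := by omega
        rw [h1, h2]
        exact harc _
      · have h1 : (i.1 + 1) % (n2 - n1) = 0 := by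
          have : i.1 + 1 = n2 - n1 := by omega
          rw [this, Nat.mod_self]
        have h2 : n2 - 1 - i.1 = n1 := by omega
        rw [h1, h2, heq]
        have h6 := harc (n2 - 1)
        rw [show n2 - 1 + 1 = n2 from by omega] at h6
        simpa using h6
  obtain ⟨s, hsS, hsrc⟩ := hsrc
  have hfsT : f s ∈ T := (hFP s hsS).1
  have hT'' : IsSpanningTree G (insert (e s) (T.erase (f s))) :=
    exchange hT (heG s) (hET s hsS) (hFP s hsS)
  have hreach : ∀ i ∈ S.erase s, ∀ u v : V, e s = s(u, v) →
      (fromEdgeSet ((T : Set (Sym2 V)) \ {f i})).Reachable u v := by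
    intro i hi u v huv
    exact not_otp_reach (hFP i (Finset.mem_of_mem_erase hi)).1
      (hsrc i (Finset.mem_of_mem_erase hi) (Finset.ne_of_mem_erase hi)) huv
  have htrans : ∀ i ∈ S.erase s, ∀ h : Sym2 V,
      OnTreePath (insert (e s) (T.erase (f s))) h (f i) ↔ OnTreePath T h (f i) := by
    intro i hi h
    have hfifs : f i ≠ f s := fun hh => (Finset.ne_of_mem_erase hi) ((hdist i s).2.1 hh)
    exact otp_pres hT (heG s) (hET s hsS) (hFP s hsS)
      (hFP i (Finset.mem_of_mem_erase hi)).1 hfifs (hreach i hi) h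
  have hET'' : ∀ i ∈ S.erase s, e i ∉ insert (e s) (T.erase (f s)) := by
    intro i hi hmem
    rcases Finset.mem_insert.mp hmem with hh | hh
    · exact (Finset.ne_of_mem_erase hi) ((hdist i s).1 hh)
    · exact hET i (Finset.mem_of_mem_erase hi) (Finset.mem_of_mem_erase hh)
  have hFP'' : ∀ i ∈ S.erase s, OnTreePath (insert (e s) (T.erase (f s))) (e i) (f i) :=
    fun i hi => (htrans i hi (e i)).mpr (hFP i (Finset.mem_of_mem_erase hi))
  have hacyc'' : ¬ ∃ κ : ℕ, ∃ _ : 2 ≤ κ, ∃ g : Fin κ → Fin ℓ, (∀ i, g i ∈ S.erase s) ∧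
      Function.Injective g ∧ ∀ i : Fin κ,
        OnTreePath (insert (e s) (T.erase (f s)))
          (e (g ⟨(i.1 + 1) % κ, Nat.mod_lt _ (Nat.lt_of_lt_of_le (by decide : 0 < 2) ‹_›)⟩)) (f (g i)) := by
    rintro ⟨κ, hκ, g, hgS, hinj, harc2⟩
    exact hacyc ⟨κ, hκ, g, fun i => Finset.mem_of_mem_erase (hgS i), hinj,
      fun i => (htrans (g i) (hgS i) _).mp (harc2 i)⟩
  have hres := ih (S.erase s) (Finset.erase_ssubset hsS) (insert (e s) (T.erase (f s)))
    hT'' hET'' hFP'' hacyc''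
  have heqset : ((insert (e s) (T.erase (f s))) ∪ (S.erase s).image e) \ (S.erase s).image f
      = (T ∪ S.image e) \ S.image f := by
    ext z
    simp only [Finset.mem_sdiff, Finset.mem_union, Finset.mem_image, Finset.mem_insert,
      Finset.mem_erase]
    constructor
    · rintro ⟨h1, h2⟩
      constructor
      · rcases h1 with (rfl | ⟨hz1, hz2⟩) | ⟨i, ⟨hi1, hi2⟩, hiz⟩
        · exact Or.inr ⟨s, hsS, rfl⟩
        · exact Or.inl hz2
        · exact Or.inr ⟨i, hi2, hiz⟩
      · rintro ⟨i, hiS, hiz⟩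
        by_cases his : i = s
        · subst his
          rcases h1 with (rfl | ⟨hz1, hz2⟩) | ⟨j, ⟨hj1, hj2⟩, hjz⟩
          · exact (hdist i i).2.2 hiz.symm
          · exact hz1 hiz.symm
          · exact (hdist j i).2.2 (hjz.trans hiz.symm)
        · exact h2 ⟨i, ⟨his, hiS⟩, hiz⟩
    · rintro ⟨h1, h2⟩
      have hzfs : z ≠ f s := fun hh => h2 ⟨s, hsS, hh.symm⟩
      constructor
      · rcases h1 with hzT | ⟨i, hiS, hiz⟩
        · exact Or.inl (Or.inr ⟨hzfs, hzT⟩)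
        · by_cases his : i = s
          · subst his
            exact Or.inl (Or.inl hiz.symm)
          · exact Or.inr ⟨i, ⟨his, hiS⟩, hiz⟩
      · rintro ⟨i, ⟨hins, hiS⟩, hiz⟩
        exact h2 ⟨i, hiS, hiz⟩
  rw [heqset] at hres
  exact hres

end Stmt6Aux


/-- Claim 1 of the paper: if a simultaneous multi-exchange on a spanning tree
fails to yield a spanning tree, the cycle graph contains a directed cycle among the pairs. -/
theorem stmt6 {V : Type*} [Fintype V] [DecidableEq V] (G : SimpleGraph V)
    (hG : G.Connected) (T : Finset (Sym2 V)) (hT : IsSpanningTree G T)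
    (ℓ : ℕ) (e f : Fin ℓ → Sym2 V)
    (hdist : ∀ i j : Fin ℓ, (e i = e j → i = j) ∧ (f i = f j → i = j) ∧ e i ≠ f j)
    (heG : ∀ i, e i ∈ G.edgeSet) (heT : ∀ i, e i ∉ T)
    (hfP : ∀ i, OnTreePath T (e i) (f i))
    (hnot : ¬ IsSpanningTree G
      ((T ∪ Finset.image e Finset.univ) \ Finset.image f Finset.univ)) :
    ∃ κ : ℕ, ∃ _ : 2 ≤ κ, ∃ g : Fin κ → Fin ℓ, Function.Injective g ∧
      ∀ i : Fin κ,
        OnTreePath T (e (g ⟨(i.1 + 1) % κ, Nat.mod_lt _ (by omega)⟩)) (f (g i)) := by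
  by_contra hcon
  refine hnot (Stmt6Aux.lemA hG e f hdist heG Finset.univ T hT
    (fun i _ => heT i) (fun i _ => hfP i) ?_)
  rintro ⟨κ, hκ, g, -, hinj, harc⟩
  exact hcon ⟨κ, hκ, g, hinj, harc⟩
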